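/- Let X be a mixture set, u : X → ℝ mixture linear and non-constant, n ≥ 3 a finite integer, and w ∈ ℝ^n with w_s > 0 for every s. Define ≽ on X^n by: x ≽ y iff ∑_{s=1}^n w_s u(x_s) ≥ ∑_{s=1}^n w_s u(y_s). Fix t with 2 ≤ t ≤ n − 1. Suppose the early-bias condition holds at period t: for all a, b, c, d ∈ X with a ≻ c and b ≺ d (in the induced relation) and every x ∈ X^n, if (x₁,…,x_{t−1},a,b,x_{t+2},…,xₙ) ∼ (x₁,…,x_{t−1},c,d,x_{t+2},…,xₙ) then (x₁,…,x_{t−2},a,b,x_{t+2},…,xₙ,x_{t−1}) ≽ (x₁,…,x_{t−2},c,d,x_{t+2},…,xₙ,x_{t−1}). Then w_t / w_{t−1} ≤ w_{t+1} / w_t, i.e., w_t² ≤ w_{t−1} w_{t+1}. -/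

import Mathlib

/-- A mixture set: a set `X` with an operation `mix x l y` (written `xλy` in the paper),
satisfying the Herstein–Milnor axioms for `l, m ∈ [0,1]`. -/
structure MixtureSpace (X : Type*) where
  mix : X → ℝ → X → X
  mix_one : ∀ x y : X, mix x 1 y = x
  mix_comm : ∀ (x y : X), ∀ l ∈ Set.Icc (0:ℝ) 1, mix x l y = mix y (1 - l) x
  mix_assoc : ∀ (x y : X), ∀ l ∈ Set.Icc (0:ℝ) 1, ∀ m ∈ Set.Icc (0:ℝ) 1,
    mix (mix x m y) l y = mix x (l * m) y

/-- `u : X → ℝ` is mixture linear. -/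
def MixtureSpace.linear {X : Type*} (M : MixtureSpace X) (u : X → ℝ) : Prop :=
  ∀ (x y : X), ∀ l ∈ Set.Icc (0:ℝ) 1, u (M.mix x l y) = l * u x + (1 - l) * u y

/-- Strict (asymmetric) part of a relation. -/
def strictP {α : Type*} (R : α → α → Prop) (x y : α) : Prop := R x y ∧ ¬ R y x

/-- Componentwise mixture of finite streams. -/
def mixStream {X : Type*} (M : MixtureSpace X) {n : ℕ} (x : Fin n → X) (l : ℝ)
    (y : Fin n → X) : Fin n → X := fun t => M.mix (x t) l (y t)

/-- Componentwise mixture of infinite streams. -/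
def mixSeq {X : Type*} (M : MixtureSpace X) (x : ℕ → X) (l : ℝ) (y : ℕ → X) :
    ℕ → X := fun t => M.mix (x t) l (y t)

/-! ### Finite-horizon axioms -/

/-- F1: weak order (complete and transitive). -/
def AxF1 {X : Type*} {n : ℕ} (R : (Fin n → X) → (Fin n → X) → Prop) : Prop :=
  (∀ x y, R x y ∨ R y x) ∧ Transitive R

/-- F2: non-triviality (a ≻ b for some a, b in the induced relation). -/
def AxF2 {X : Type*} {n : ℕ} (R : (Fin n → X) → (Fin n → X) → Prop) : Prop :=
  ∃ a b : X, strictP R (fun _ => a) (fun _ => b)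

/-- F3: mixture independence. -/
def AxF3 {X : Type*} (M : MixtureSpace X) {n : ℕ}
    (R : (Fin n → X) → (Fin n → X) → Prop) : Prop :=
  ∀ x y z : Fin n → X, ∀ l ∈ Set.Ioo (0:ℝ) 1,
    (R x y ↔ R (mixStream M x l z) (mixStream M y l z))

/-- F4: mixture continuity. -/
def AxF4 {X : Type*} (M : MixtureSpace X) {n : ℕ}
    (R : (Fin n → X) → (Fin n → X) → Prop) : Prop :=
  ∀ x y z : Fin n → X,
    IsClosed {l : ℝ | l ∈ Set.Icc (0:ℝ) 1 ∧ R (mixStream M x l z) y} ∧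
    IsClosed {l : ℝ | l ∈ Set.Icc (0:ℝ) 1 ∧ R y (mixStream M x l z)}

/-- F5: monotonicity. -/
def AxF5 {X : Type*} {n : ℕ} (R : (Fin n → X) → (Fin n → X) → Prop) : Prop :=
  ∀ x y : Fin n → X, (∀ t, R (fun _ => x t) (fun _ => y t)) → R x y

/-- `(u, w)` provides an AA representation for `R` on `X^n`. -/
def AARep {X : Type*} (M : MixtureSpace X) {n : ℕ}
    (R : (Fin n → X) → (Fin n → X) → Prop) (u : X → ℝ) (w : Fin n → ℝ) : Prop :=
  M.linear u ∧ (∃ a b : X, u a ≠ u b) ∧ (∀ t, 0 ≤ w t) ∧ (∃ t, 0 < w t) ∧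
  ∀ x y : Fin n → X, (R x y ↔ (∑ t, w t * u (x t)) ≥ ∑ t, w t * u (y t))

/-! ### Infinite-horizon notions -/

/-- Ultimately constant stream (equals `x0` from some period on). -/
def UltConst {X : Type*} (x0 : X) (x : ℕ → X) : Prop := ∃ T, ∀ t, T ≤ t → x t = x0

/-- Member of `X**`: ultimately constant or constant. -/
def InXSS {X : Type*} (x0 : X) (x : ℕ → X) : Prop :=
  UltConst x0 x ∨ ∃ a, ∀ t, x t = a

/-- `[a]_k`: the stream with `a` in period `k` and `x0` elsewhere. -/
def bracket {X : Type*} (x0 : X) (a : X) (k : ℕ) : ℕ → X :=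
  fun t => if t = k then a else x0

/-- `(x₁, …, x_{k−1}, a, x_{k+1}, …, x_T, x0, x0, …)`. -/
def truncMod {X : Type*} (x0 : X) (x : ℕ → X) (k : ℕ) (a : X) (T : ℕ) : ℕ → X :=
  fun t => if t = k then a else if t ≤ T then x t else x0

/-- I1: weak order. -/
def AxI1 {X : Type*} (R : (ℕ → X) → (ℕ → X) → Prop) : Prop :=
  (∀ x y, R x y ∨ R y x) ∧ Transitive R

/-- I2: non-triviality `a ≻ x0 ≻ b` in the induced relation. -/
def AxI2 {X : Type*} (x0 : X) (R : (ℕ → X) → (ℕ → X) → Prop) : Prop :=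
  ∃ a b : X, strictP R (fun _ => a) (fun _ => x0) ∧ strictP R (fun _ => x0) (fun _ => b)

/-- I3: mixture independence on `X**`. -/
def AxI3 {X : Type*} (M : MixtureSpace X) (x0 : X)
    (R : (ℕ → X) → (ℕ → X) → Prop) : Prop :=
  ∀ x y z : ℕ → X, InXSS x0 x → InXSS x0 y → InXSS x0 z →
    ∀ l ∈ Set.Ioo (0:ℝ) 1, (R x y ↔ R (mixSeq M x l z) (mixSeq M y l z))

/-- I4: mixture continuity. -/
def AxI4 {X : Type*} (M : MixtureSpace X) (x0 : X)
    (R : (ℕ → X) → (ℕ → X) → Prop) : Prop :=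
  ∀ x z : ℕ → X, InXSS x0 x → InXSS x0 z → ∀ y : ℕ → X,
    IsClosed {l : ℝ | l ∈ Set.Icc (0:ℝ) 1 ∧ R (mixSeq M x l z) y} ∧
    IsClosed {l : ℝ | l ∈ Set.Icc (0:ℝ) 1 ∧ R y (mixSeq M x l z)}

/-- I5: monotonicity. -/
def AxI5 {X : Type*} (R : (ℕ → X) → (ℕ → X) → Prop) : Prop :=
  ∀ x y : ℕ → X, (∀ t, R (fun _ => x t) (fun _ => y t)) → R x y

/-- I6: convergence. -/
def AxI6 {X : Type*} (x0 : X) (R : (ℕ → X) → (ℕ → X) → Prop) : Prop :=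
  ∀ (x : ℕ → X) (a : X) (k : ℕ),
    (strictP R (bracket x0 a k) (bracket x0 (x k) k) →
      ∃ Tp, k ≤ Tp ∧ ∀ T, Tp ≤ T → R (truncMod x0 x k a T) x) ∧
    (strictP R (bracket x0 (x k) k) (bracket x0 a k) →
      ∃ Tm, k ≤ Tm ∧ ∀ T, Tm ≤ T → R x (truncMod x0 x k a T))

/-- `(u, w)` provides an AA representation for `R` on `X^∞` (with its
discounted-utility series converging for every stream). -/
def AARepInf {X : Type*} (M : MixtureSpace X)
    (R : (ℕ → X) → (ℕ → X) → Prop) (u : X → ℝ) (w : ℕ → ℝ) : Prop :=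
  M.linear u ∧ (∃ a b : X, u a ≠ u b) ∧ (∀ t, 0 ≤ w t) ∧ (∃ t, 0 < w t) ∧
  ∃ U : (ℕ → X) → ℝ,
    (∀ x : ℕ → X, Filter.Tendsto (fun N => ∑ t ∈ Finset.range N, w t * u (x t))
      Filter.atTop (nhds (U x))) ∧
    ∀ x y : ℕ → X, (R x y ↔ U x ≥ U y)

/-! ### Exponential discounting -/

/-- F2′: essentiality of period 1. -/
def AxF2' {X : Type*} {n : ℕ} (R : (Fin n → X) → (Fin n → X) → Prop)
    (h0 : 0 < n) : Prop :=
  ∃ (a b : X) (x : Fin n → X),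
    strictP R (Function.update x ⟨0, h0⟩ a) (Function.update x ⟨0, h0⟩ b)

/-- F6: impatience. -/
def AxF6 {X : Type*} {n : ℕ} (R : (Fin n → X) → (Fin n → X) → Prop)
    (h0 : 0 < n) (h1 : 1 < n) : Prop :=
  ∀ a b : X, strictP R (fun _ => a) (fun _ => b) →
    ∀ x : Fin n → X,
      strictP R (Function.update (Function.update x ⟨0, h0⟩ a) ⟨1, h1⟩ b)
               (Function.update (Function.update x ⟨0, h0⟩ b) ⟨1, h1⟩ a)

/-- `(x₂, …, xₙ, a)`. -/
def shiftApp {X : Type*} {n : ℕ} (x : Fin n → X) (a : X) : Fin n → X :=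
  fun t => if h : (t : ℕ) + 1 < n then x ⟨(t : ℕ) + 1, h⟩ else a

/-- F7: stationarity. -/
def AxF7 {X : Type*} {n : ℕ} (R : (Fin n → X) → (Fin n → X) → Prop)
    (h0 : 0 < n) : Prop :=
  ∀ (a : X) (x y : Fin n → X),
    (R (Function.update x ⟨0, h0⟩ a) (Function.update y ⟨0, h0⟩ a) ↔
     R (shiftApp x a) (shiftApp y a))

/-- `(u, δ)` provides an exponentially discounted expected utility representation. -/
def ExpRep {X : Type*} (M : MixtureSpace X) {n : ℕ}
    (R : (Fin n → X) → (Fin n → X) → Prop) (u : X → ℝ) (δ : ℝ) : Prop :=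
  M.linear u ∧ (∃ a b : X, u a ≠ u b) ∧ δ ∈ Set.Ioo (0:ℝ) 1 ∧
  ∀ x y : Fin n → X,
    (R x y ↔ (∑ t : Fin n, δ ^ (t : ℕ) * u (x t)) ≥ ∑ t : Fin n, δ ^ (t : ℕ) * u (y t))

/-- I2′: essentiality of period 1 (infinite horizon). -/
def AxI2' {X : Type*} (x0 : X) (R : (ℕ → X) → (ℕ → X) → Prop) : Prop :=
  ∃ a b : X, strictP R (bracket x0 a 0) (fun _ => x0) ∧
    strictP R (fun _ => x0) (bracket x0 b 0)

/-- `(a, x₁, x₂, …)`. -/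
def consSeq {X : Type*} (a : X) (x : ℕ → X) : ℕ → X :=
  fun t => if t = 0 then a else x (t - 1)

/-- I7: stationarity (infinite horizon). -/
def AxI7 {X : Type*} (R : (ℕ → X) → (ℕ → X) → Prop) : Prop :=
  ∀ (a : X) (x y : ℕ → X), (R (consSeq a x) (consSeq a y) ↔ R x y)

/-- `(u, δ)` provides an exponentially discounted expected utility representation
on `X^∞`, with converging series. -/
def ExpRepInf {X : Type*} (M : MixtureSpace X)
    (R : (ℕ → X) → (ℕ → X) → Prop) (u : X → ℝ) (δ : ℝ) : Prop :=
  M.linear u ∧ (∃ a b : X, u a ≠ u b) ∧ δ ∈ Set.Ioo (0:ℝ) 1 ∧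
  ∃ U : (ℕ → X) → ℝ,
    (∀ x : ℕ → X, Filter.Tendsto (fun N => ∑ t ∈ Finset.range N, δ ^ t * u (x t))
      Filter.atTop (nhds (U x))) ∧
    ∀ x y : ℕ → X, (R x y ↔ U x ≥ U y)

/-! ### Semi-hyperbolic discounting -/

/-- The SH(T) discount function at (1-based) period `t`:
`D 1 = 1`, `D t = β₁⋯β_{t−1} δ^{t−1}` for `2 ≤ t ≤ T`,
`D t = β₁⋯β_{T−1} δ^{t−1}` for `t > T`. -/
noncomputable def SHD (T : ℕ) (β : ℕ → ℝ) (δ : ℝ) (t : ℕ) : ℝ :=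
  (∏ i ∈ Finset.Icc 1 (min t T - 1), β i) * δ ^ (t - 1)

/-- Parameter restrictions: `0 < β₁ ≤ … ≤ β_{T−1} ≤ 1` and `δ ∈ (0,1)`. -/
def SHParams (T : ℕ) (β : ℕ → ℝ) (δ : ℝ) : Prop :=
  (∀ i : ℕ, 1 ≤ i → i ≤ T - 1 → 0 < β i ∧ β i ≤ 1) ∧
  (∀ i : ℕ, 1 ≤ i → i + 1 ≤ T - 1 → β i ≤ β (i + 1)) ∧
  δ ∈ Set.Ioo (0:ℝ) 1

/-- `(u, β, δ)` provides an SH(T) discounted expected utility representation on `X^n`. -/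
def SHRep {X : Type*} (M : MixtureSpace X) {n : ℕ}
    (R : (Fin n → X) → (Fin n → X) → Prop)
    (T : ℕ) (β : ℕ → ℝ) (δ : ℝ) (u : X → ℝ) : Prop :=
  M.linear u ∧ (∃ a b : X, u a ≠ u b) ∧ SHParams T β δ ∧
  ∀ x y : Fin n → X,
    (R x y ↔ (∑ s : Fin n, SHD T β δ ((s : ℕ) + 1) * u (x s)) ≥
      ∑ s : Fin n, SHD T β δ ((s : ℕ) + 1) * u (y s))

/-- F2″: essentiality of (1-based) periods `1, …, T`. -/
def AxF2'' {X : Type*} {n : ℕ} (R : (Fin n → X) → (Fin n → X) → Prop)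
    (T : ℕ) (hTn : T ≤ n) : Prop :=
  ∃ (a b : X) (x : Fin n → X), ∀ i : ℕ, ∀ hi : i < T,
    strictP R (Function.update x ⟨i, lt_of_lt_of_le hi hTn⟩ a)
             (Function.update x ⟨i, lt_of_lt_of_le hi hTn⟩ b)

/-- F6′: impatience between (1-based) periods `T` and `T+1`. -/
def AxF6' {X : Type*} {n : ℕ} (R : (Fin n → X) → (Fin n → X) → Prop)
    (T : ℕ) (h1 : T - 1 < n) (h2 : T < n) : Prop :=
  ∀ a b : X, strictP R (fun _ => a) (fun _ => b) →
    ∀ x : Fin n → X,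
      strictP R (Function.update (Function.update x ⟨T-1, h1⟩ a) ⟨T, h2⟩ b)
               (Function.update (Function.update x ⟨T-1, h1⟩ b) ⟨T, h2⟩ a)

/-- Delete (0-based) coordinate `i`, shift the rest left, and append `a` at the end. -/
def delIns {X : Type*} {n : ℕ} (x : Fin n → X) (i : ℕ) (a : X) : Fin n → X :=
  fun s => if (s : ℕ) < i then x s
    else if h : (s : ℕ) + 1 < n then x ⟨(s : ℕ) + 1, h⟩ else a

/-- F7′: stationarity from (1-based) period `T`. -/
def AxF7' {X : Type*} {n : ℕ} (R : (Fin n → X) → (Fin n → X) → Prop)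
    (T : ℕ) (h1 : T - 1 < n) : Prop :=
  ∀ (a : X) (x y : Fin n → X), (∀ s : Fin n, (s : ℕ) < T - 1 → x s = y s) →
    (R (Function.update x ⟨T-1, h1⟩ a) (Function.update y ⟨T-1, h1⟩ a) ↔
     R (delIns x (T-1) a) (delIns y (T-1) a))

/-- `(x₁, …, x_{t−2}, a, b, x_{t+2}, …, xₙ, x_{t−1})` where `i` is the 0-based
index of period `t` (so `i = t − 1`). -/
def ebShiftFin {X : Type*} {n : ℕ} (x : Fin n → X) (i : ℕ) (hi : i - 1 < n)
    (a b : X) : Fin n → X :=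
  fun s => if (s : ℕ) < i - 1 then x s
    else if (s : ℕ) = i - 1 then a
    else if (s : ℕ) = i then b
    else if h : (s : ℕ) + 1 < n then x ⟨(s : ℕ) + 1, h⟩
    else x ⟨i - 1, hi⟩

/-- F8: early bias. -/
def AxF8 {X : Type*} {n : ℕ} (R : (Fin n → X) → (Fin n → X) → Prop)
    (T : ℕ) (hTn : T < n) : Prop :=
  ∀ a b c d : X,
    strictP R (fun _ => a) (fun _ => c) → strictP R (fun _ => d) (fun _ => b) →
    ∀ x : Fin n → X, ∀ i : ℕ, ∀ hi1 : 1 ≤ i, ∀ hi2 : i ≤ T - 1,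
      (R (Function.update (Function.update x ⟨i, by omega⟩ a) ⟨i+1, by omega⟩ b)
         (Function.update (Function.update x ⟨i, by omega⟩ c) ⟨i+1, by omega⟩ d) ∧
       R (Function.update (Function.update x ⟨i, by omega⟩ c) ⟨i+1, by omega⟩ d)
         (Function.update (Function.update x ⟨i, by omega⟩ a) ⟨i+1, by omega⟩ b)) →
      R (ebShiftFin x i (by omega) a b) (ebShiftFin x i (by omega) c d)

/-- `(u, β, δ)` provides an SH(T) discounted expected utility representation on `X^∞`. -/
def SHRepInf {X : Type*} (M : MixtureSpace X)
    (R : (ℕ → X) → (ℕ → X) → Prop)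
    (T : ℕ) (β : ℕ → ℝ) (δ : ℝ) (u : X → ℝ) : Prop :=
  M.linear u ∧ (∃ a b : X, u a ≠ u b) ∧ SHParams T β δ ∧
  ∃ U : (ℕ → X) → ℝ,
    (∀ x : ℕ → X, Filter.Tendsto
      (fun N => ∑ t ∈ Finset.range N, SHD T β δ (t + 1) * u (x t))
      Filter.atTop (nhds (U x))) ∧
    ∀ x y : ℕ → X, (R x y ↔ U x ≥ U y)

/-- I2″: essentiality of (1-based) periods `1, …, T`. -/
def AxI2'' {X : Type*} (x0 : X) (R : (ℕ → X) → (ℕ → X) → Prop) (T : ℕ) : Prop :=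
  ∃ a b : X, ∀ t : ℕ, t < T →
    strictP R (bracket x0 a t) (fun _ => x0) ∧ strictP R (fun _ => x0) (bracket x0 b t)

/-- Delete (0-based) coordinate `i` of an infinite stream. -/
def delSeq {X : Type*} (x : ℕ → X) (i : ℕ) : ℕ → X :=
  fun t => if t < i then x t else x (t + 1)

/-- I7′: stationarity from (1-based) period `T`. -/
def AxI7' {X : Type*} (R : (ℕ → X) → (ℕ → X) → Prop) (T : ℕ) : Prop :=
  ∀ (a : X) (x y : ℕ → X), (∀ t, t < T - 1 → x t = y t) →
    (R (Function.update x (T-1) a) (Function.update y (T-1) a) ↔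
     R (delSeq x (T-1)) (delSeq y (T-1)))

/-- `(x₁, …, x_{t−2}, a, b, x_{t+2}, …)` where `i = t − 1` (0-based index of period `t`). -/
def ebShiftSeq {X : Type*} (x : ℕ → X) (i : ℕ) (a b : X) : ℕ → X :=
  fun s => if s < i - 1 then x s
    else if s = i - 1 then a
    else if s = i then b
    else x (s + 1)

/-- I8: early bias (infinite horizon). -/
def AxI8 {X : Type*} (R : (ℕ → X) → (ℕ → X) → Prop) (T : ℕ) : Prop :=
  ∀ a b c d : X,
    strictP R (fun _ => a) (fun _ => c) → strictP R (fun _ => d) (fun _ => b) →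
    ∀ x : ℕ → X, ∀ i : ℕ, 1 ≤ i → i ≤ T - 1 →
      (R (Function.update (Function.update x i a) (i+1) b)
         (Function.update (Function.update x i c) (i+1) d) ∧
       R (Function.update (Function.update x i c) (i+1) d)
         (Function.update (Function.update x i a) (i+1) b)) →
      R (ebShiftSeq x i a b) (ebShiftSeq x i c d)

lemma sum_sub_two {n : ℕ} (F G : Fin n → ℝ) (j k : Fin n) (hjk : j ≠ k)
    (h : ∀ s, s ≠ j → s ≠ k → F s = G s) :
    (∑ s, F s) - ∑ s, G s = (F j - G j) + (F k - G k) := by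
  rw [← Finset.sum_sub_distrib]
  rw [← Finset.sum_subset (Finset.subset_univ ({j, k} : Finset (Fin n)))
    (fun s _ hs => by
      simp only [Finset.mem_insert, Finset.mem_singleton, not_or] at hs
      rw [h s hs.1 hs.2]; ring)]
  rw [Finset.sum_pair hjk]

set_option maxHeartbeats 1000000 in
/-- Early bias at (1-based) period `t = i + 1` forces
`w_t / w_{t−1} ≤ w_{t+1} / w_t`, i.e. `w_t² ≤ w_{t−1} w_{t+1}`
(0-based indices `i−1, i, i+1`). -/
theorem early_bias_weight_ineq {X : Type*} (M : MixtureSpace X) (u : X → ℝ)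
    (hu : M.linear u) (hnc : ∃ a b : X, u a ≠ u b)
    (n : ℕ) (hn : 3 ≤ n) (w : Fin n → ℝ) (hw : ∀ s, 0 < w s)
    (R : (Fin n → X) → (Fin n → X) → Prop)
    (hR : ∀ x y : Fin n → X,
      R x y ↔ (∑ s, w s * u (x s)) ≥ ∑ s, w s * u (y s))
    (i : ℕ) (hi1 : 1 ≤ i) (hi2 : i ≤ n - 2)
    (hEB : ∀ a b c d : X,
      strictP R (fun _ => a) (fun _ => c) → strictP R (fun _ => d) (fun _ => b) →
      ∀ x : Fin n → X,
        (R (Function.update (Function.update x ⟨i, by omega⟩ a) ⟨i+1, by omega⟩ b)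
           (Function.update (Function.update x ⟨i, by omega⟩ c) ⟨i+1, by omega⟩ d) ∧
         R (Function.update (Function.update x ⟨i, by omega⟩ c) ⟨i+1, by omega⟩ d)
           (Function.update (Function.update x ⟨i, by omega⟩ a) ⟨i+1, by omega⟩ b)) →
        R (ebShiftFin x i (by omega) a b) (ebShiftFin x i (by omega) c d)) :
    (w ⟨i, by omega⟩) ^ 2 ≤ w ⟨i - 1, by omega⟩ * w ⟨i + 1, by omega⟩ := by
  have hnc' : ∃ p q : X, u q < u p := by
    obtain ⟨p, q, h⟩ := hnc
    rcases h.lt_or_gt with h | h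
    · exact ⟨q, p, h⟩
    · exact ⟨p, q, h⟩
  obtain ⟨p, q, hpq⟩ := hnc'
  have hin : i - 1 < n := by omega
  have hin1 : i < n := by omega
  have hin2 : i + 1 < n := by omega
  set j : Fin n := ⟨i - 1, hin⟩ with hj
  set k : Fin n := ⟨i, hin1⟩ with hk
  set m : Fin n := ⟨i + 1, hin2⟩ with hm
  have hjk : j ≠ k := by simp [hj, hk, Fin.ext_iff]; omega
  have hkm : k ≠ m := by simp [hk, hm, Fin.ext_iff]
  set S : ℝ := w k + w m with hS
  have hSpos : 0 < S := add_pos (hw k) (hw m)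
  set D : ℝ := u p - u q with hD
  have hDpos : 0 < D := sub_pos.mpr hpq
  set lam : ℝ := w m / S with hlamdef
  set mu : ℝ := w k / S with hmudef
  have hlamS : lam * S = w m := div_mul_cancel₀ _ hSpos.ne'
  have hmuS : mu * S = w k := div_mul_cancel₀ _ hSpos.ne'
  have hlam0 : 0 < lam := div_pos (hw m) hSpos
  have hmu0 : 0 < mu := div_pos (hw k) hSpos
  have hlam : lam ∈ Set.Icc (0:ℝ) 1 :=
    ⟨hlam0.le, by rw [hlamdef, div_le_one hSpos]; linarith [hw k]⟩
  have hmu : mu ∈ Set.Icc (0:ℝ) 1 :=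
    ⟨hmu0.le, by rw [hmudef, div_le_one hSpos]; linarith [hw m]⟩
  set a : X := M.mix p lam q with ha
  set d : X := M.mix p mu q with hd
  have hua : u a = u q + lam * D := by rw [ha, hu p q lam hlam, hD]; ring
  have hud : u d = u q + mu * D := by rw [hd, hu p q mu hmu, hD]; ring
  have huaq : u q < u a := by nlinarith
  have hudq : u q < u d := by nlinarith
  have : Nonempty (Fin n) := ⟨j⟩
  have hW : 0 < ∑ s, w s := Finset.sum_pos (fun s _ => hw s) Finset.univ_nonempty
  have key : ∀ y z : X, u z < u y → strictP R (fun _ => y) (fun _ => z) := by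
    intro y z hyz
    have h1 : ∀ v : X, (∑ s : Fin n, w s * u v) = (∑ s : Fin n, w s) * u v :=
      fun v => (Finset.sum_mul _ _ _).symm
    constructor
    · rw [hR]
      show (∑ s : Fin n, w s * u y) ≥ ∑ s : Fin n, w s * u z
      rw [h1, h1]
      exact mul_le_mul_of_nonneg_left hyz.le hW.le
    · rw [hR]
      show ¬ ((∑ s : Fin n, w s * u z) ≥ ∑ s : Fin n, w s * u y)
      rw [h1, h1]
      exact not_le.mpr (mul_lt_mul_of_pos_left hyz hW)
  set x : Fin n → X := fun _ => q with hx
  -- the indifference hypothesis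
  have hik : (⟨i, by omega⟩ : Fin n) = k := rfl
  have him : (⟨i + 1, by omega⟩ : Fin n) = m := rfl
  have hfg : ∀ s : Fin n, s ≠ k → s ≠ m →
      Function.update (Function.update x k a) m q s
        = Function.update (Function.update x k q) m d s := by
    intro s hsk hsm
    rw [Function.update_of_ne hsm, Function.update_of_ne hsk,
        Function.update_of_ne hsm, Function.update_of_ne hsk]
  have hsum_eq : (∑ s, w s * u (Function.update (Function.update x k a) m q s))
      = ∑ s, w s * u (Function.update (Function.update x k q) m d s) := by
    have hdiff := sum_sub_two
      (fun s => w s * u (Function.update (Function.update x k a) m q s))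
      (fun s => w s * u (Function.update (Function.update x k q) m d s))
      k m hkm (fun s hsk hsm => by rw [hfg s hsk hsm])
    have e1 : Function.update (Function.update x k a) m q k = a := by
      rw [Function.update_of_ne hkm, Function.update_self]
    have e2 : Function.update (Function.update x k q) m d k = q := by
      rw [Function.update_of_ne hkm, Function.update_self]
    have e3 : Function.update (Function.update x k a) m q m = q :=
      Function.update_self _ _ _
    have e4 : Function.update (Function.update x k q) m d m = d :=
      Function.update_self _ _ _
    simp only [e1, e2, e3, e4] at hdiff
    have hz : (w k * u a - w k * u q) + (w m * u q - w m * u d) = 0 := by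
      rw [hua, hud]
      nlinarith [hlamS, hmuS]
    linarith
  have hpair : R (Function.update (Function.update x ⟨i, by omega⟩ a) ⟨i+1, by omega⟩ q)
         (Function.update (Function.update x ⟨i, by omega⟩ q) ⟨i+1, by omega⟩ d) ∧
       R (Function.update (Function.update x ⟨i, by omega⟩ q) ⟨i+1, by omega⟩ d)
         (Function.update (Function.update x ⟨i, by omega⟩ a) ⟨i+1, by omega⟩ q) := by
    rw [hik, him]
    constructor
    · rw [hR]; exact le_of_eq hsum_eq.symm
    · rw [hR]; exact le_of_eq hsum_eq
  have hcon := hEB a q q d (key a q huaq) (key d q hudq) x hpair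
  rw [hR] at hcon
  -- analyze the ebShift streams
  have hne1 : ¬ (i - 1 < i - 1) := lt_irrefl _
  have hne2 : ¬ (i < i - 1) := by omega
  have hne3 : i ≠ i - 1 := by omega
  have eFj : ebShiftFin x i (by omega) a q j = a := by
    show ebShiftFin x i _ a q ⟨i - 1, hin⟩ = a
    simp [ebShiftFin, hne1]
  have eGj : ebShiftFin x i (by omega) q d j = q := by
    show ebShiftFin x i _ q d ⟨i - 1, hin⟩ = q
    simp [ebShiftFin, hne1]
  have eFk : ebShiftFin x i (by omega) a q k = q := by
    show ebShiftFin x i _ a q ⟨i, hin1⟩ = q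
    simp [ebShiftFin, hne2, hne3]
  have eGk : ebShiftFin x i (by omega) q d k = d := by
    show ebShiftFin x i _ q d ⟨i, hin1⟩ = d
    simp [ebShiftFin, hne2, hne3]
  have hoff : ∀ s : Fin n, s ≠ j → s ≠ k →
      ebShiftFin x i (by omega) a q s = ebShiftFin x i (by omega) q d s := by
    intro s hsj hsk
    have h1 : (s : ℕ) ≠ i - 1 := fun h => hsj (Fin.ext h)
    have h2 : (s : ℕ) ≠ i := fun h => hsk (Fin.ext h)
    simp only [ebShiftFin, if_neg h1, if_neg h2]
  have hdiff := sum_sub_two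
    (fun s => w s * u (ebShiftFin x i (by omega) a q s))
    (fun s => w s * u (ebShiftFin x i (by omega) q d s))
    j k hjk (fun s hsj hsk => by rw [hoff s hsj hsk])
  simp only [eFj, eGj, eFk, eGk] at hdiff
  have hge : (w j * u a - w j * u q) + (w k * u q - w k * u d) ≥ 0 := by
    rw [← hdiff]; linarith [hcon]
  rw [hua, hud] at hge
  -- hge : w j * lam * D - w k * mu * D ≥ 0
  have hge2 : w k * mu ≤ w j * lam := by nlinarith
  have h3 := mul_le_mul_of_nonneg_right hge2 hSpos.le
  rw [mul_assoc, mul_assoc, hlamS, hmuS] at h3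
  show w k ^ 2 ≤ w j * w m
  rw [pow_two]
  exact h3
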